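/- The Cauchy determinant identity: for complex numbers x₁,...,xₙ, y₁,...,yₙ with all 1 - xᵢyⱼ nonzero, det((1/(1-xᵢyⱼ))ᵢⱼ) = ∏_{1≤i<j≤n}(xᵢ-xⱼ)(yᵢ-yⱼ) / ∏_{i,j}(1-xᵢyⱼ). -/

import Mathlib

open Finset

section Aux
open Polynomial

lemma rev_eval {ι : Type*} [DecidableEq ι] (y : ι → ℂ) (s : Finset ι) (t : ℂ) :
    ∏ k ∈ s, (1 - t * y k)
      = ∑ m ∈ Finset.range (s.card + 1),
          (∏ k ∈ s, (X - C (y k))).coeff m * t ^ (s.card - m) := by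
  induction s using Finset.induction_on with
  | empty => simp
  | @insert a s ha ih =>
    set p := ∏ k ∈ s, (X - C (y k)) with hp
    set d := s.card with hd
    have hdeg : p.natDegree ≤ d := by
      refine le_trans (Polynomial.natDegree_prod_le _ _) ?_
      simp [natDegree_X_sub_C, hd]
    rw [Finset.prod_insert ha, Finset.prod_insert ha, Finset.card_insert_of_notMem ha]
    show (1 - t * y a) * ∏ k ∈ s, (1 - t * y k)
      = ∑ m ∈ Finset.range (d + 1 + 1),
          ((X - C (y a)) * ∏ k ∈ s, (X - C (y k))).coeff m * t ^ (d + 1 - m)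
    have hS1 : ∑ m ∈ Finset.range (d + 1 + 1), (X * p).coeff m * t ^ (d + 1 - m)
        = ∏ k ∈ s, (1 - t * y k) := by
      rw [Finset.sum_range_succ']
      have h0 : (X * p).coeff 0 = 0 := by
        simp [Polynomial.mul_coeff_zero]
      rw [h0, zero_mul, add_zero, ih]
      refine Finset.sum_congr rfl fun m hm => ?_
      rw [Polynomial.coeff_X_mul]
      congr 2
      omega
    have hS2 : ∑ m ∈ Finset.range (d + 1 + 1), y a * p.coeff m * t ^ (d + 1 - m)
        = t * y a * ∏ k ∈ s, (1 - t * y k) := by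
      rw [Finset.sum_range_succ]
      have h0 : p.coeff (d + 1) = 0 :=
        Polynomial.coeff_eq_zero_of_natDegree_lt (by omega)
      rw [h0, mul_zero, zero_mul, add_zero, ih, Finset.mul_sum]
      refine Finset.sum_congr rfl fun m hm => ?_
      simp only [Finset.mem_range] at hm
      have : d + 1 - m = (d - m) + 1 := by omega
      rw [this, pow_succ]
      ring
    have key : ∀ m, ((X - C (y a)) * ∏ k ∈ s, (X - C (y k))).coeff m
        = (X * p).coeff m - y a * p.coeff m := fun m => by
      rw [← hp, sub_mul, Polynomial.coeff_sub, Polynomial.coeff_C_mul]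
    have expand : ∑ m ∈ Finset.range (d + 1 + 1),
          ((X - C (y a)) * ∏ k ∈ s, (X - C (y k))).coeff m * t ^ (d + 1 - m)
        = ∑ m ∈ Finset.range (d + 1 + 1),
            ((X * p).coeff m * t ^ (d + 1 - m) - y a * p.coeff m * t ^ (d + 1 - m)) :=
      Finset.sum_congr rfl fun m _ => by rw [key m]; ring
    rw [expand, Finset.sum_sub_distrib, hS1, hS2]
    ring

lemma ite_prod {n : ℕ} (f : Fin n → Fin n → ℂ) :
    ∏ i, ∏ j, (if i < j then f i j else 1) = ∏ i, ∏ j ∈ Ioi i, f i j := by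
  refine Finset.prod_congr rfl fun i _ => ?_
  rw [← Finset.prod_filter]
  congr 1
  ext j
  simp

lemma det_vr {n : ℕ} (x : Fin n → ℂ) :
    (Matrix.of fun i m : Fin n => x i ^ (m.rev : ℕ)).det
      = ∏ i, ∏ j ∈ Ioi i, (x i - x j) := by
  have h1 : (Matrix.of fun i m : Fin n => x i ^ (m.rev : ℕ))
      = (Matrix.vandermonde (x ∘ Fin.rev)).submatrix Fin.revPerm Fin.revPerm := by
    ext i m
    simp [Matrix.vandermonde, Fin.rev_rev]
  rw [h1, Matrix.det_submatrix_equiv_self, Matrix.det_vandermonde]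
  rw [Finset.prod_sigma', Finset.prod_sigma']
  refine Finset.prod_nbij' (fun p => ⟨p.2.rev, p.1.rev⟩) (fun p => ⟨p.2.rev, p.1.rev⟩)
    ?_ ?_ ?_ ?_ ?_ <;> simp [Fin.rev_lt_rev, Fin.rev_rev, Function.comp]

end Aux

open Polynomial in
/-- Cauchy's determinant identity. -/
theorem cauchy_determinant (n : ℕ) (x y : Fin n → ℂ)
    (h : ∀ i j, 1 - x i * y j ≠ 0) :
    Matrix.det (Matrix.of fun i j => (1 - x i * y j)⁻¹)
      = (∏ i, ∏ j, if i < j then (x i - x j) * (y i - y j) else 1)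
        / ∏ i, ∏ j, (1 - x i * y j) := by
  classical
  by_cases hy : Function.Injective y
  · -- main case
    set P : Fin n → ℂ[X] := fun j => ∏ k ∈ univ.erase j, (X - C (y k)) with hP
    set M : Matrix (Fin n) (Fin n) ℂ := Matrix.of (fun m j => (P j).coeff m) with hM
    have hdegP : ∀ j, (P j).natDegree < n := by
      intro j
      have h1 : (P j).natDegree ≤ ∑ k ∈ univ.erase j, (X - C (y k)).natDegree :=
        Polynomial.natDegree_prod_le _ _
      have h2 : ∑ k ∈ univ.erase j, (X - C (y k)).natDegree = n - 1 := by
        simp [natDegree_X_sub_C, Finset.card_erase_of_mem]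
      have h3 : 0 < n := j.pos
      omega
    have hVM : Matrix.vandermonde y * M
        = Matrix.diagonal (fun j => ∏ k ∈ univ.erase j, (y j - y k)) := by
      ext i j
      rw [Matrix.mul_apply]
      have he : ∑ m : Fin n, Matrix.vandermonde y i m * M m j = (P j).eval (y i) := by
        rw [Polynomial.eval_eq_sum_range' (hdegP j),
          ← Fin.sum_univ_eq_sum_range (fun m => (P j).coeff m * y i ^ m)]
        exact Finset.sum_congr rfl fun m _ => by
          simp [hM, Matrix.vandermonde, mul_comm]
      rw [he, hP, Polynomial.eval_prod]
      by_cases hij : i = j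
      · subst hij
        simp [Matrix.diagonal]
      · rw [Matrix.diagonal_apply_ne' _ fun hne => hij hne.symm]
        refine Finset.prod_eq_zero (Finset.mem_erase.mpr ⟨hij, Finset.mem_univ i⟩) ?_
        simp
    have hdetM : M.det = ∏ i, ∏ j ∈ Ioi i, (y i - y j) := by
      have h1 := congrArg Matrix.det hVM
      rw [Matrix.det_mul, Matrix.det_vandermonde, Matrix.det_diagonal] at h1
      have herase : ∀ j : Fin n, univ.erase j = Ioi j ∪ Iio j := fun j => by
        ext k
        simp only [Finset.mem_erase, Finset.mem_univ, and_true, Finset.mem_union,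
          Finset.mem_Ioi, Finset.mem_Iio, Fin.lt_def, Ne, Fin.ext_iff]
        omega
      have hdisj : ∀ j : Fin n, Disjoint (Ioi j) (Iio j) := fun j =>
        Finset.disjoint_left.mpr fun k hk hk' =>
          absurd (Finset.mem_Iio.mp hk') (not_lt.mpr (le_of_lt (Finset.mem_Ioi.mp hk)))
      have hswap : ∏ j, ∏ k ∈ Iio j, (y j - y k) = ∏ i, ∏ j ∈ Ioi i, (y j - y i) := by
        rw [Finset.prod_sigma', Finset.prod_sigma']
        refine Finset.prod_nbij' (fun p => ⟨p.2, p.1⟩) (fun p => ⟨p.2, p.1⟩)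
          ?_ ?_ ?_ ?_ ?_ <;> simp
      have h2 : ∏ j, ∏ k ∈ univ.erase j, (y j - y k)
          = (∏ i, ∏ j ∈ Ioi i, (y j - y i)) * ∏ i, ∏ j ∈ Ioi i, (y i - y j) := by
        calc ∏ j, ∏ k ∈ univ.erase j, (y j - y k)
            = ∏ j, ((∏ k ∈ Ioi j, (y j - y k)) * ∏ k ∈ Iio j, (y j - y k)) :=
              Finset.prod_congr rfl fun j _ => by
                rw [herase j, Finset.prod_union (hdisj j)]
          _ = (∏ j, ∏ k ∈ Ioi j, (y j - y k)) * ∏ j, ∏ k ∈ Iio j, (y j - y k) :=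
              Finset.prod_mul_distrib
          _ = (∏ i, ∏ j ∈ Ioi i, (y j - y i)) * ∏ i, ∏ j ∈ Ioi i, (y i - y j) := by
              rw [hswap]; exact mul_comm _ _
      have hVne : (∏ i, ∏ j ∈ Ioi i, (y j - y i)) ≠ 0 := by
        refine Finset.prod_ne_zero_iff.mpr fun i _ => Finset.prod_ne_zero_iff.mpr
          fun j hj => sub_ne_zero.mpr fun hji => ?_
        exact absurd (hy hji.symm) (ne_of_lt (Finset.mem_Ioi.mp hj))
      rw [h2] at h1
      exact mul_left_cancel₀ hVne h1
    have hBM : (Matrix.of fun i j => ∏ k ∈ univ.erase j, (1 - x i * y k))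
        = (Matrix.of fun i m : Fin n => x i ^ (m.rev : ℕ)) * M := by
      ext i j
      rw [Matrix.mul_apply, Matrix.of_apply, rev_eval y (univ.erase j) (x i)]
      have hc : (univ.erase j).card = n - 1 := by
        simp [Finset.card_erase_of_mem]
      rw [hc]
      have hn : n - 1 + 1 = n := Nat.succ_pred_eq_of_pos j.pos
      rw [hn, ← Fin.sum_univ_eq_sum_range (fun m => (P j).coeff m * x i ^ (n - 1 - m))]
      refine Finset.sum_congr rfl fun m _ => ?_
      have : (m.rev : ℕ) = n - 1 - (m : ℕ) := by
        rw [Fin.val_rev]; omega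
      rw [Matrix.of_apply, this]
      simp [hM, mul_comm]
    have hC : (Matrix.of fun i j => ((1 : ℂ) - x i * y j)⁻¹)
        = Matrix.diagonal (fun i => (∏ k, (1 - x i * y k))⁻¹)
          * Matrix.of (fun i j => ∏ k ∈ univ.erase j, (1 - x i * y k)) := by
      ext i j
      rw [Matrix.diagonal_mul, Matrix.of_apply, Matrix.of_apply]
      have hsplit : ∏ k, (1 - x i * y k)
          = (1 - x i * y j) * ∏ k ∈ univ.erase j, (1 - x i * y k) :=
        (Finset.mul_prod_erase univ _ (Finset.mem_univ j)).symm
      have hne : ∏ k ∈ univ.erase j, (1 - x i * y k) ≠ 0 :=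
        Finset.prod_ne_zero_iff.mpr fun k _ => h i k
      rw [hsplit, mul_inv, mul_assoc, inv_mul_cancel₀ hne, mul_one]
    rw [hC, Matrix.det_mul, hBM, Matrix.det_mul, det_vr, hdetM, Matrix.det_diagonal,
      ite_prod (fun i j => (x i - x j) * (y i - y j))]
    have hprod : ∏ i, ∏ j ∈ Ioi i, (x i - x j) * (y i - y j)
        = (∏ i, ∏ j ∈ Ioi i, (x i - x j)) * ∏ i, ∏ j ∈ Ioi i, (y i - y j) := by
      rw [← Finset.prod_mul_distrib]
      exact Finset.prod_congr rfl fun i _ => by rw [← Finset.prod_mul_distrib]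
    have hDne : (∏ i, ∏ j, (1 - x i * y j)) ≠ 0 :=
      Finset.prod_ne_zero_iff.mpr fun i _ => Finset.prod_ne_zero_iff.mpr fun j _ => h i j
    rw [hprod, Finset.prod_inv_distrib, div_eq_mul_inv]
    ring
  · -- y not injective
    obtain ⟨a, b, hab, hne⟩ := Function.not_injective_iff.mp hy
    have hdet : Matrix.det (Matrix.of fun i j => ((1 : ℂ) - x i * y j)⁻¹) = 0 := by
      refine Matrix.det_zero_of_column_eq hne fun k => ?_
      simp [hab]
    obtain ⟨i, j, hij, hyij⟩ : ∃ i j : Fin n, i < j ∧ y i = y j := by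
      rcases Ne.lt_or_gt hne with hlt | hlt
      · exact ⟨a, b, hlt, hab⟩
      · exact ⟨b, a, hlt, hab.symm⟩
    have hnum : (∏ i, ∏ j, if i < j then (x i - x j) * (y i - y j) else 1) = 0 := by
      refine Finset.prod_eq_zero (Finset.mem_univ i) ?_
      refine Finset.prod_eq_zero (Finset.mem_univ j) ?_
      rw [if_pos hij, hyij, sub_self, mul_zero]
    rw [hdet, hnum, zero_div]
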